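/- Let n_1, d, N ≥ 1, let P(x,Y) ∈ (ℂ[[x,Y]])^N with x ∈ ℂ^{n_1}, Y ∈ ℂ^N, and let φ_0(x,t) ∈ (ℂ[[x,t]])^N with φ_0(0) = 0, t ∈ ℂ^d, such that det(∂P/∂Y)(x, φ_0(x,t)) ≢ 0. Let α_0 ∈ ℕ^{n_1} and β_0 ∈ ℕ^d be such that the Taylor coefficient ∂^{α_0}_x ∂^{β_0}_t|_{(x,t)=0} det(∂P/∂Y)(x, φ_0(x,t)) is nonzero. Then for any formal power series mapping φ(x,t) ∈ (ℂ[[x,t]])^N satisfying (1) ∂^α_x ∂^β_t φ(0) = ∂^α_x ∂^β_t φ_0(0) for all (α,β) ∈ ℕ^{n_1}×ℕ^d with |α| ≤ |α_0| and |β| ≤ |β_0|, and (2) for some k ∈ ℕ, ∂^β_t|_{t=0} P(x, φ(x,t)) = ∂^β_t|_{t=0} P(x, φ_0(x,t)) for all β with |β| ≤ |β_0| + k, one has ∂^β_t φ(x,0) = ∂^β_t φ_0(x,0) for every β ∈ ℕ^d with |β| ≤ k. -/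

import Mathlib

open MvPowerSeries

noncomputable section

namespace Paper

variable {σ τ : Type*}

/-- Total degree `|α|` of a multi-index. -/
def msize (α : σ →₀ ℕ) : ℕ := α.sum fun _ k => k

/-- Multi-index factorial `α!`. -/
def mfact (β : σ →₀ ℕ) : ℕ := β.prod fun _ k => k.factorial

/-- A formal power series is convergent if its coefficients satisfy a Cauchy-type estimate
`‖f_α‖ ≤ C r^{-|α|}`. -/
def IsConv (f : MvPowerSeries σ ℂ) : Prop :=
  ∃ C r : ℝ, 0 < C ∧ 0 < r ∧
    ∀ α : σ →₀ ℕ, ‖MvPowerSeries.coeff α f‖ ≤ C * r⁻¹ ^ msize α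

/-- Coefficientwise complex conjugation `f̄`. -/
def sconj (f : MvPowerSeries σ ℂ) : MvPowerSeries σ ℂ :=
  fun α => starRingEnd ℂ (MvPowerSeries.coeff α f)

/-- Iterated partial derivative `∂^β f`. -/
def dpow (β : σ →₀ ℕ) (f : MvPowerSeries σ ℂ) : MvPowerSeries σ ℂ :=
  fun α => (((β.prod fun i k => (α i + k).choose k * k.factorial) : ℕ) : ℂ) *
    MvPowerSeries.coeff (α + β) f

/-- First-order partial derivative in the direction `i`. -/
def pd (i : σ) (f : MvPowerSeries σ ℂ) : MvPowerSeries σ ℂ :=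
  dpow (Finsupp.single i 1) f

/-- Apply `∂^β`, then keep only the variables in the range of `e` (an injection),
setting all the others equal to `0`. -/
def dAt0 (e : σ → τ) (β : τ →₀ ℕ) (f : MvPowerSeries τ ℂ) : MvPowerSeries σ ℂ :=
  fun γ => MvPowerSeries.coeff (Finsupp.mapDomain e γ) (dpow β f)

/-- Substitution of the power series `a s` (all assumed to have vanishing constant term)
for the variables of `f`. -/
def substC [Fintype σ] [DecidableEq σ] (a : σ → MvPowerSeries τ ℂ) (f : MvPowerSeries σ ℂ) :
    MvPowerSeries τ ℂ :=
  fun γ => ∑ α ∈ Finset.Iic (Finsupp.equivFunOnFinite.symm fun _ : σ => msize γ),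
    MvPowerSeries.coeff α f * MvPowerSeries.coeff γ (∏ s, (a s) ^ (α s))

/-- Renaming of variables along an injection `e`. -/
def inject [Fintype σ] [DecidableEq σ] (e : σ → τ) (f : MvPowerSeries σ ℂ) :
    MvPowerSeries τ ℂ :=
  substC (fun s => MvPowerSeries.X (e s)) f

/-- The Jacobian determinant of a formal self-mapping. -/
def jacDet {ι : Type*} [Fintype ι] [DecidableEq ι] (h : ι → MvPowerSeries ι ℂ) :
    MvPowerSeries ι ℂ :=
  (Matrix.of fun k l => pd l (h k)).det

/-- The sum of a (convergent) power series at a point. -/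
def evalAt [Fintype σ] (f : MvPowerSeries σ ℂ) (x : σ → ℂ) : ℂ :=
  ∑' α : σ →₀ ℕ, MvPowerSeries.coeff α f * ∏ i, x i ^ α i

/-- The variables `(z, χ, τ) ∈ ℂ^n × ℂ^n × ℂ^d`. -/
abbrev W3 (n d : ℕ) : Type := Fin n ⊕ (Fin n ⊕ Fin d)

variable {n d : ℕ}

/-- `Q` is a convergent defining series, in normal coordinates, of a germ at `0` of a
real-analytic generic submanifold of codimension `d` in `ℂ^{n+d}`:  it is convergent,
satisfies the normality conditions `Q(0,χ,τ) = τ`, `Q(z,0,τ) = τ` and the reality condition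
`Q(z,χ,Q̄(χ,z,τ)) = τ`. -/
structure IsDefSeries (Q : Fin d → MvPowerSeries (W3 n d) ℂ) : Prop where
  conv : ∀ c, IsConv (Q c)
  normal1 : ∀ c, dAt0 (Sum.inr : Fin n ⊕ Fin d → W3 n d) 0 (Q c)
      = MvPowerSeries.X (Sum.inr c)
  normal2 : ∀ c, dAt0 (Sum.map (id : Fin n → Fin n) (Sum.inr : Fin d → Fin n ⊕ Fin d)) 0 (Q c)
      = MvPowerSeries.X (Sum.inr c)
  reality : ∀ c, substC (fun v : W3 n d => match v with
      | Sum.inl i => MvPowerSeries.X (Sum.inl i)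
      | Sum.inr (Sum.inl i) => MvPowerSeries.X (Sum.inr (Sum.inl i))
      | Sum.inr (Sum.inr c') => substC (fun w : W3 n d => match w with
          | Sum.inl i => MvPowerSeries.X (Sum.inr (Sum.inl i))
          | Sum.inr (Sum.inl i) => MvPowerSeries.X (Sum.inl i)
          | Sum.inr (Sum.inr c'') => MvPowerSeries.X (Sum.inr (Sum.inr c'')))
          (sconj (Q c'))) (Q c) = MvPowerSeries.X (Sum.inr (Sum.inr c))

/-- Composition `f(z, Q(z,χ,τ))`, a series in the variables `(z,χ,τ)`. -/
def compQ (Q : Fin d → MvPowerSeries (W3 n d) ℂ) (f : MvPowerSeries (Fin n ⊕ Fin d) ℂ) :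
    MvPowerSeries (W3 n d) ℂ :=
  substC (fun w : Fin n ⊕ Fin d => match w with
    | Sum.inl i => MvPowerSeries.X (Sum.inl i)
    | Sum.inr c => Q c) f

/-- The components of `H̄(χ,τ)`, viewed as series in the variables `(z,χ,τ)`. -/
def barSub (H : Fin n ⊕ Fin d → MvPowerSeries (Fin n ⊕ Fin d) ℂ) (v : Fin n ⊕ Fin d) :
    MvPowerSeries (W3 n d) ℂ :=
  inject (Sum.inr : Fin n ⊕ Fin d → W3 n d) (sconj (H v))

/-- `H` sends `M` into `M'`:  `Q'(F(z,Q(z,χ,τ)), H̄(χ,τ)) = G(z,Q(z,χ,τ))`. -/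
def Sends (Q Q' : Fin d → MvPowerSeries (W3 n d) ℂ)
    (H : Fin n ⊕ Fin d → MvPowerSeries (Fin n ⊕ Fin d) ℂ) : Prop :=
  ∀ r, substC (fun v : W3 n d => match v with
      | Sum.inl i => compQ Q (H (Sum.inl i))
      | Sum.inr v' => barSub H v') (Q' r)
    = compQ Q (H (Sum.inr r))

/-- The Taylor coefficient `Q_α(χ,τ)` of a series `Q(z,χ,τ)` with respect to `z^α`. -/
def coeffZ (α : Fin n →₀ ℕ) (f : MvPowerSeries (W3 n d) ℂ) :
    MvPowerSeries (Fin n ⊕ Fin d) ℂ :=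
  fun γ => MvPowerSeries.coeff
    (Finsupp.mapDomain Sum.inl α + Finsupp.mapDomain Sum.inr γ) f

/-- Holomorphic nondegeneracy at `0`, via Stanton's criterion:  there are multi-indices
`α^1,…,α^n` and components `r_1,…,r_n` such that `det (∂Q^{r_k}_{α^k}/∂χ_l) ≢ 0`. -/
def HolNondeg (Q : Fin d → MvPowerSeries (W3 n d) ℂ) : Prop :=
  ∃ (A : Fin n → (Fin n →₀ ℕ)) (rr : Fin n → Fin d),
    (Matrix.of fun k l : Fin n => pd (Sum.inl l) (coeffZ (A k) (Q (rr k)))).det ≠ 0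

/-- The reflection function `R(z',χ,τ) = Q'(z', H̄(χ,τ))` (components);  the ambient
variables `W3 n d` are read as `(z', (χ, τ))`. -/
def Refl (Q' : Fin d → MvPowerSeries (W3 n d) ℂ)
    (H : Fin n ⊕ Fin d → MvPowerSeries (Fin n ⊕ Fin d) ℂ) (r : Fin d) :
    MvPowerSeries (W3 n d) ℂ :=
  substC (fun v : W3 n d => match v with
    | Sum.inl i => MvPowerSeries.X (Sum.inl i)
    | Sum.inr v' => barSub H v') (Q' r)

/-- Variables `(z^1, χ^1, z^2, χ^2, …)` (j blocks of size n, block `2k` is `z^{k+1}` and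
block `2k+1` is `χ^{k+1}`) together with `t ∈ ℂ^d`. -/
abbrev SVar (n d j : ℕ) : Type := (Fin j × Fin n) ⊕ Fin d

/-- The Segre set mappings `U_j`. -/
def Useg (Q : Fin d → MvPowerSeries (W3 n d) ℂ) :
    (j : ℕ) → Fin d → MvPowerSeries (SVar n d j) ℂ
  | 0 => fun c => MvPowerSeries.X (Sum.inr c)
  | 1 => fun c => MvPowerSeries.X (Sum.inr c)
  | m + 2 => fun c =>
      substC (fun v : SVar n d (m + 1) => match v with
        | Sum.inl (k, a) => MvPowerSeries.X (Sum.inl (Fin.castSucc k, a))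
        | Sum.inr c' => substC (fun w : W3 n d => match w with
            | Sum.inl a => MvPowerSeries.X (Sum.inl (⟨m, by omega⟩, a))
            | Sum.inr (Sum.inl a) => MvPowerSeries.X (Sum.inl (⟨m + 1, by omega⟩, a))
            | Sum.inr (Sum.inr c'') => MvPowerSeries.X (Sum.inr c''))
            (if (m + 2) % 2 = 0 then Q c' else sconj (Q c')))
        (Useg Q (m + 1) c)

/-- The Segre set mappings `V_j = (z^1, U_j)`. -/
def Vseg (Q : Fin d → MvPowerSeries (W3 n d) ℂ) (j : ℕ) :
    Fin n ⊕ Fin d → MvPowerSeries (SVar n d j) ℂ :=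
  fun c => match c with
  | Sum.inl i => if h : 0 < j then MvPowerSeries.X (Sum.inl (⟨0, h⟩, i)) else 0
  | Sum.inr c' => Useg Q j c'

/-- Minimality of `M` at `0`, expressed through the Segre mapping of order `2(d+1)`:
there is a sequence of points `p_k → 0` at which `V_{2(d+1)}(p_k;0) = 0` and the Jacobian
matrix of `p ↦ V_{2(d+1)}(p;0)` has rank `n+d`. -/
def Minimal (Q : Fin d → MvPowerSeries (W3 n d) ℂ) : Prop :=
  ∃ p : ℕ → ((Fin (2 * (d + 1)) × Fin n) → ℂ),
    Filter.Tendsto p Filter.atTop (nhds 0) ∧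
    ∀ k, (∀ c, evalAt (Vseg Q (2 * (d + 1)) c) (Sum.elim (p k) 0) = 0) ∧
      (Matrix.of fun (c : Fin n ⊕ Fin d) (v : Fin (2 * (d + 1)) × Fin n) =>
        evalAt (pd (Sum.inl v) (Vseg Q (2 * (d + 1)) c)) (Sum.elim (p k) 0)).rank = n + d

/-- Minimality at `0` for a hypersurface in normal coordinates: `Q(z,χ,0) ≢ 0`. -/
def MinimalHyp (Q : Fin 1 → MvPowerSeries (W3 n 1) ℂ) : Prop :=
  dAt0 (Sum.map (id : Fin n → Fin n) (Sum.inl : Fin n → Fin n ⊕ Fin 1)) 0 (Q 0) ≠ 0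

/-- `M'` contains no (nonconstant) formal holomorphic curve through `0`:  the only formal
curve `γ = (c, g)` with `γ(0) = 0` and `g(t) = Q'(c(t), c̄(s), ḡ(s))` is the constant one. -/
def NoFormalCurve (Q' : Fin 1 → MvPowerSeries (W3 n 1) ℂ) : Prop :=
  ∀ (c : Fin n → MvPowerSeries Unit ℂ) (g : MvPowerSeries Unit ℂ),
    (∀ i, MvPowerSeries.constantCoeff (c i) = 0) →
    MvPowerSeries.constantCoeff g = 0 →
    inject (Sum.inl : Unit → Unit ⊕ Unit) g =
      substC (fun v : W3 n 1 => match v with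
        | Sum.inl i => inject (Sum.inl : Unit → Unit ⊕ Unit) (c i)
        | Sum.inr (Sum.inl i) => inject (Sum.inr : Unit → Unit ⊕ Unit) (sconj (c i))
        | Sum.inr (Sum.inr _) => inject (Sum.inr : Unit → Unit ⊕ Unit) (sconj g)) (Q' 0) →
    (∀ i, c i = 0) ∧ g = 0

/-- The determinant `det ∂_z(F(z,Q(z,χ,τ)))`, a series in `(z,χ,τ)`. -/
def Dser (Q : Fin d → MvPowerSeries (W3 n d) ℂ)
    (H : Fin n ⊕ Fin d → MvPowerSeries (Fin n ⊕ Fin d) ℂ) : MvPowerSeries (W3 n d) ℂ :=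
  (Matrix.of fun i l : Fin n => pd (Sum.inl l) (compQ Q (H (Sum.inl i)))).det

/-- `∂^η_z ∂^δ_τ|_{(z,τ)=(0,0)}`, a series in `χ`. -/
def dZT0 (η : Fin n →₀ ℕ) (δ : Fin d →₀ ℕ) (f : MvPowerSeries (W3 n d) ℂ) :
    MvPowerSeries (Fin n) ℂ :=
  dAt0 (fun i : Fin n => Sum.inr (Sum.inl i))
    (Finsupp.mapDomain Sum.inl η + Finsupp.mapDomain (fun c => Sum.inr (Sum.inr c)) δ) f

/-- `∂^β_τ|_{τ=0}` of a series in `(χ,τ)`, a series in `χ`. -/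
def dTau0 (β : Fin d →₀ ℕ) (f : MvPowerSeries (Fin n ⊕ Fin d) ℂ) : MvPowerSeries (Fin n) ℂ :=
  dAt0 (Sum.inl : Fin n → Fin n ⊕ Fin d) (Finsupp.mapDomain Sum.inr β) f

/-- `Q'_α(H̄(χ,τ))` (r-th component), a series in `(χ,τ)`. -/
def QpaH (Q' : Fin d → MvPowerSeries (W3 n d) ℂ)
    (H : Fin n ⊕ Fin d → MvPowerSeries (Fin n ⊕ Fin d) ℂ) (α : Fin n →₀ ℕ) (r : Fin d) :
    MvPowerSeries (Fin n ⊕ Fin d) ℂ :=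
  substC (fun v => sconj (H v)) (coeffZ α (Q' r))

/-- `F(V_j(z^1,χ^2,z^2,…;0))`, embedded as a series on the blocks `1,…,j` of
`(χ^1,z^1,χ^2,z^2,…)` (j+1 blocks), with `t = 0`. -/
def FVsetZ (Q : Fin d → MvPowerSeries (W3 n d) ℂ)
    (H : Fin n ⊕ Fin d → MvPowerSeries (Fin n ⊕ Fin d) ℂ) (j : ℕ) (i : Fin n) :
    MvPowerSeries (SVar n d (j + 1)) ℂ :=
  substC (fun v : SVar n d j => match v with
    | Sum.inl (k, a) => MvPowerSeries.X (Sum.inl (Fin.succ k, a))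
    | Sum.inr _ => 0)
    (substC (Vseg Q j) (H (Sum.inl i)))

/-- `H̄(V̄_{j+1}(χ^1,z^1,χ^2,z^2,…;t))` (components). -/
def HbarV (Q : Fin d → MvPowerSeries (W3 n d) ℂ)
    (H : Fin n ⊕ Fin d → MvPowerSeries (Fin n ⊕ Fin d) ℂ) (j : ℕ) (v : Fin n ⊕ Fin d) :
    MvPowerSeries (SVar n d (j + 1)) ℂ :=
  substC (fun w : Fin n ⊕ Fin d => sconj (Vseg Q (j + 1) w)) (sconj (H v))

/-- `(∂^α_{z'} Q'^r)(F(V_j(z^1,χ^2,…;0)), H̄(V̄_{j+1}(χ^1,z^1,χ^2,…;t)))`. -/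
def Eexpr (Q Q' : Fin d → MvPowerSeries (W3 n d) ℂ)
    (H : Fin n ⊕ Fin d → MvPowerSeries (Fin n ⊕ Fin d) ℂ) (j : ℕ)
    (α : Fin n →₀ ℕ) (r : Fin d) : MvPowerSeries (SVar n d (j + 1)) ℂ :=
  substC (fun v : W3 n d => match v with
    | Sum.inl i => FVsetZ Q H j i
    | Sum.inr v' => HbarV Q H j v')
    (dpow (Finsupp.mapDomain Sum.inl α) (Q' r))

/-- The substitution `z ↦ z^1`, `χ ↦ χ^1`, `τ ↦ Ū_{j+1}(χ^1,z^1,χ^2,…;t)`, where the blocks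
of `SVar n d (j+1)` are read as `(χ^1, z^1, χ^2, z^2, …)`. -/
def tauSubst (Q : Fin d → MvPowerSeries (W3 n d) ℂ) (j : ℕ) (hj : 1 ≤ j) :
    W3 n d → MvPowerSeries (SVar n d (j + 1)) ℂ :=
  fun v => match v with
  | Sum.inl i => MvPowerSeries.X (Sum.inl (⟨1, by omega⟩, i))
  | Sum.inr (Sum.inl i) => MvPowerSeries.X (Sum.inl (⟨0, by omega⟩, i))
  | Sum.inr (Sum.inr c) => sconj (Useg Q (j + 1) c)

/-- `Φ_j = det(∂_{z^1}(F(z^1,Q(z^1,χ^1,τ))))|_{τ = Ū_{j+1}(χ^1,z^1,χ^2,…;t)}`. -/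
def PhiJ (Q : Fin d → MvPowerSeries (W3 n d) ℂ)
    (H : Fin n ⊕ Fin d → MvPowerSeries (Fin n ⊕ Fin d) ℂ) (j : ℕ) (hj : 1 ≤ j) :
    MvPowerSeries (SVar n d (j + 1)) ℂ :=
  substC (tauSubst Q j hj) (Dser Q H)

/-- `(∂^η_{z^1} H^{(r)}(z^1,Q(z^1,χ^1,τ)))|_{τ = Ū_{j+1}(χ^1,z^1,χ^2,…;t)}` (component `c`
of `H^{(r)} = (F, G^r)`). -/
def PsiJ (Q : Fin d → MvPowerSeries (W3 n d) ℂ)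
    (H : Fin n ⊕ Fin d → MvPowerSeries (Fin n ⊕ Fin d) ℂ) (j : ℕ) (hj : 1 ≤ j)
    (c : Fin n ⊕ Unit) (r : Fin d) (η : Fin n →₀ ℕ) :
    MvPowerSeries (SVar n d (j + 1)) ℂ :=
  substC (tauSubst Q j hj)
    (dpow (Finsupp.mapDomain Sum.inl η)
      (compQ Q (H (Sum.elim Sum.inl (fun _ => Sum.inr r) c))))


open Finset

lemma msize_add (a b : σ →₀ ℕ) : msize (a + b) = msize a + msize b :=
  Finsupp.sum_add_index' (fun _ => rfl) (fun _ _ _ => rfl)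

lemma msize_zero : msize (0 : σ →₀ ℕ) = 0 := Finsupp.sum_zero_index

lemma apply_le_msize (a : σ →₀ ℕ) (s : σ) : a s ≤ msize a := by
  by_cases hs : s ∈ a.support
  · exact Finset.single_le_sum (f := fun s => a s) (fun _ _ => Nat.zero_le _) hs
  · simp [Finsupp.notMem_support_iff.mp hs]

lemma msize_eq_zero {a : σ →₀ ℕ} : msize a = 0 ↔ a = 0 := by
  constructor
  · intro h
    ext s
    have := apply_le_msize a s
    simp only [Finsupp.coe_zero, Pi.zero_apply]
    omega
  · rintro rfl; exact msize_zero

lemma msize_mono {a b : σ →₀ ℕ} (h : a ≤ b) : msize a ≤ msize b := by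
  obtain ⟨c, rfl⟩ := exists_add_of_le h
  simp [msize_add]

lemma msize_fintype [Fintype σ] (a : σ →₀ ℕ) : msize a = ∑ s, a s :=
  Finsupp.sum_fintype _ _ (fun _ => rfl)

lemma msize_mapDomain (f : σ → τ) (a : σ →₀ ℕ) : msize (Finsupp.mapDomain f a) = msize a :=
  Finsupp.sum_mapDomain_index (fun _ => rfl) (fun _ _ _ => rfl)

/-- `f` has order `≥ p`. -/
def ordGE (p : ℕ) (f : MvPowerSeries τ ℂ) : Prop :=
  ∀ γ : τ →₀ ℕ, msize γ < p → MvPowerSeries.coeff γ f = 0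

lemma ordGE_zero (f : MvPowerSeries τ ℂ) : ordGE 0 f := fun _ h => absurd h (by omega)

lemma ordGE.mono {p q : ℕ} {f : MvPowerSeries τ ℂ} (h : ordGE p f) (hq : q ≤ p) : ordGE q f :=
  fun γ hγ => h γ (by omega)

lemma ordGE.mul [DecidableEq τ] {p q : ℕ} {f g : MvPowerSeries τ ℂ}
    (hf : ordGE p f) (hg : ordGE q g) : ordGE (p + q) (f * g) := by
  intro γ hγ
  rw [MvPowerSeries.coeff_mul]
  refine Finset.sum_eq_zero fun x hx => ?_
  rw [Finset.HasAntidiagonal.mem_antidiagonal] at hx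
  have : msize x.1 + msize x.2 = msize γ := by rw [← msize_add, hx]
  rcases Nat.lt_or_ge (msize x.1) p with h1 | h1
  · rw [hf x.1 h1, zero_mul]
  · rw [hg x.2 (by omega), mul_zero]

lemma ordGE.prod [DecidableEq τ] {ι : Type*} (F : Finset ι) (p : ι → ℕ)
    (g : ι → MvPowerSeries τ ℂ) (h : ∀ i ∈ F, ordGE (p i) (g i)) :
    ordGE (∑ i ∈ F, p i) (∏ i ∈ F, g i) := by
  classical
  induction F using Finset.induction_on with
  | empty => simpa using ordGE_zero 1
  | insert a s hnot ih =>
      rw [Finset.sum_insert hnot, Finset.prod_insert hnot]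
      exact (h a (Finset.mem_insert_self a s)).mul
        (ih fun i hi => h i (Finset.mem_insert_of_mem hi))

lemma ordGE.pow [DecidableEq τ] {p : ℕ} {f : MvPowerSeries τ ℂ} (hf : ordGE p f) (n : ℕ) :
    ordGE (n * p) (f ^ n) := by
  have := ordGE.prod (Finset.range n) (fun _ => p) (fun _ => f) (fun _ _ => hf)
  simpa using this

lemma ordGE_one {f : MvPowerSeries τ ℂ} (h : MvPowerSeries.constantCoeff f = 0) :
    ordGE 1 f := by
  intro γ hγ
  have : γ = 0 := msize_eq_zero.mp (by omega)
  subst this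
  rw [← h, ← MvPowerSeries.coeff_zero_eq_constantCoeff]

lemma ordGE_sum {ι : Type*} {p : ℕ} (F : Finset ι) (g : ι → MvPowerSeries τ ℂ)
    (h : ∀ i ∈ F, ordGE p (g i)) : ordGE p (∑ i ∈ F, g i) := by
  intro γ hγ
  rw [map_sum]
  exact Finset.sum_eq_zero fun i hi => h i hi γ hγ

lemma ordGE_prod_pow [Fintype σ] [DecidableEq τ] {v : σ → MvPowerSeries τ ℂ}
    (hv : ∀ s, MvPowerSeries.constantCoeff (v s) = 0) (α : σ →₀ ℕ) :
    ordGE (msize α) (∏ s, v s ^ α s) := by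
  rw [msize_fintype]
  refine ordGE.prod Finset.univ (fun s => α s) _ (fun s _ => ?_)
  simpa using (ordGE_one (hv s)).pow (α s)

lemma coeff_prod_pow_eq_zero [Fintype σ] [DecidableEq τ] {v : σ → MvPowerSeries τ ℂ}
    (hv : ∀ s, MvPowerSeries.constantCoeff (v s) = 0) {α : σ →₀ ℕ} {γ : τ →₀ ℕ}
    (h : msize γ < msize α) : MvPowerSeries.coeff γ (∏ s, v s ^ α s) = 0 :=
  ordGE_prod_pow hv α γ h



/-- The box of multi-indices all of whose entries are `≤ m`. -/
def cbox [Fintype σ] [DecidableEq σ] (m : ℕ) : Finset (σ →₀ ℕ) :=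
  Finset.Iic (Finsupp.equivFunOnFinite.symm fun _ : σ => m)

lemma mem_cbox [Fintype σ] [DecidableEq σ] {m : ℕ} {α : σ →₀ ℕ} : α ∈ cbox m ↔ ∀ s, α s ≤ m := by
  simp only [cbox, Finset.mem_Iic]
  constructor
  · intro h s
    simpa using h s
  · intro h s
    simpa using h s

lemma mem_cbox_of_msize_le [Fintype σ] [DecidableEq σ] {m : ℕ} {α : σ →₀ ℕ} (h : msize α ≤ m) : α ∈ cbox m :=
  mem_cbox.mpr fun s => le_trans (apply_le_msize α s) h

lemma cbox_mono [Fintype σ] [DecidableEq σ] {m m' : ℕ} (h : m ≤ m') : (cbox m : Finset (σ →₀ ℕ)) ⊆ cbox m' :=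
  fun α hα => mem_cbox.mpr fun s => le_trans (mem_cbox.mp hα s) h

lemma coeff_substC [Fintype σ] [DecidableEq σ] (a : σ → MvPowerSeries τ ℂ)
    (f : MvPowerSeries σ ℂ) (γ : τ →₀ ℕ) :
    MvPowerSeries.coeff γ (substC a f) =
      ∑ α ∈ cbox (msize γ), MvPowerSeries.coeff α f *
        MvPowerSeries.coeff γ (∏ s, (a s) ^ (α s)) := rfl

/-- The coefficient of `substC` can be computed with any index set containing the box. -/
lemma coeff_substC_superset [Fintype σ] [DecidableEq σ] [DecidableEq τ]
    {a : σ → MvPowerSeries τ ℂ} (ha : ∀ s, MvPowerSeries.constantCoeff (a s) = 0)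
    (f : MvPowerSeries σ ℂ) (γ : τ →₀ ℕ) {S : Finset (σ →₀ ℕ)}
    (hS : cbox (msize γ) ⊆ S) :
    MvPowerSeries.coeff γ (substC a f) =
      ∑ α ∈ S, MvPowerSeries.coeff α f *
        MvPowerSeries.coeff γ (∏ s, (a s) ^ (α s)) := by
  rw [coeff_substC]
  refine Finset.sum_subset hS fun α _ hα => ?_
  have : ¬ (∀ s, α s ≤ msize γ) := fun h => hα (mem_cbox.mpr h)
  push_neg at this
  obtain ⟨s, hs⟩ := this
  have : msize γ < msize α := lt_of_lt_of_le hs (apply_le_msize α s)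
  rw [coeff_prod_pow_eq_zero ha this, mul_zero]

lemma substC_one [Fintype σ] [DecidableEq σ] (a : σ → MvPowerSeries τ ℂ) :
    substC a (1 : MvPowerSeries σ ℂ) = 1 := by
  ext γ
  rw [coeff_substC]
  rw [Finset.sum_eq_single (0 : σ →₀ ℕ)]
  · simp
  · intro α _ hα
    rw [MvPowerSeries.coeff_one, if_neg hα, zero_mul]
  · intro h
    exact absurd (mem_cbox_of_msize_le (by simp [msize_zero])) h

lemma substC_add [Fintype σ] [DecidableEq σ] (a : σ → MvPowerSeries τ ℂ)
    (f g : MvPowerSeries σ ℂ) : substC a (f + g) = substC a f + substC a g := by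
  ext γ
  rw [map_add, coeff_substC, coeff_substC, coeff_substC, ← Finset.sum_add_distrib]
  exact Finset.sum_congr rfl fun α _ => by rw [map_add, add_mul]

lemma substC_zero [Fintype σ] [DecidableEq σ] (a : σ → MvPowerSeries τ ℂ) :
    substC a (0 : MvPowerSeries σ ℂ) = 0 := by
  ext γ
  rw [coeff_substC]
  simp

lemma substC_mul [Fintype σ] [DecidableEq σ] [DecidableEq τ]
    {a : σ → MvPowerSeries τ ℂ} (ha : ∀ s, MvPowerSeries.constantCoeff (a s) = 0)
    (f g : MvPowerSeries σ ℂ) : substC a (f * g) = substC a f * substC a g := by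
  ext γ
  set m := msize γ with hm
  set c : (τ →₀ ℕ) → (σ →₀ ℕ) → ℂ := fun γ' β => MvPowerSeries.coeff γ' (∏ s, (a s) ^ (β s))
    with hc
  have key : ∀ (α1 α2 : σ →₀ ℕ), MvPowerSeries.coeff γ (∏ s, (a s) ^ ((α1 + α2) s)) =
      ∑ p ∈ Finset.HasAntidiagonal.antidiagonal γ, c p.1 α1 * c p.2 α2 := by
    intro α1 α2
    have : (∏ s, (a s) ^ ((α1 + α2) s)) = (∏ s, (a s) ^ (α1 s)) * (∏ s, (a s) ^ (α2 s)) := by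
      rw [← Finset.prod_mul_distrib]
      exact Finset.prod_congr rfl fun s _ => by
        rw [Finsupp.add_apply, pow_add]
    rw [this, MvPowerSeries.coeff_mul]
  -- LHS
  have lhs : MvPowerSeries.coeff γ (substC a (f * g)) =
      ∑ α ∈ cbox m, ∑ q ∈ Finset.HasAntidiagonal.antidiagonal α, ∑ p ∈ Finset.HasAntidiagonal.antidiagonal γ,
        (MvPowerSeries.coeff q.1 f * MvPowerSeries.coeff q.2 g) * (c p.1 q.1 * c p.2 q.2) := by
    rw [coeff_substC]
    refine Finset.sum_congr rfl fun α hα => ?_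
    rw [MvPowerSeries.coeff_mul, Finset.sum_mul]
    refine Finset.sum_congr rfl fun q hq => ?_
    rw [Finset.HasAntidiagonal.mem_antidiagonal] at hq
    rw [← hq, key q.1 q.2, Finset.mul_sum]
  -- reindex the (α, antidiagonal) double sum
  have breindex : ∀ F : (σ →₀ ℕ) × (σ →₀ ℕ) → ℂ,
      (∑ α ∈ cbox m, ∑ q ∈ Finset.HasAntidiagonal.antidiagonal α, F q) =
        ∑ q ∈ (cbox m ×ˢ cbox m).filter (fun q => q.1 + q.2 ∈ cbox m), F q := by
    intro F
    rw [← Finset.sum_biUnion]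
    · congr 1
      ext q
      simp only [Finset.mem_biUnion, Finset.mem_filter, Finset.HasAntidiagonal.mem_antidiagonal,
        Finset.mem_product]
      constructor
      · rintro ⟨α, hα, rfl⟩
        refine ⟨⟨?_, ?_⟩, hα⟩
        · exact mem_cbox.mpr fun s => le_trans (by simp) (mem_cbox.mp hα s)
        · exact mem_cbox.mpr fun s => le_trans (by simp) (mem_cbox.mp hα s)
      · rintro ⟨-, h⟩
        exact ⟨q.1 + q.2, h, rfl⟩
    · intro x _ y _ hxy
      apply Finset.disjoint_left.mpr
      intro q hq hq'
      rw [Finset.HasAntidiagonal.mem_antidiagonal] at hq hq'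
      exact hxy (hq ▸ hq')
  -- the filtered sum extends to the full product
  have bfull : ∀ q ∈ (cbox m ×ˢ cbox m) \ ((cbox m ×ˢ cbox m).filter (fun q => q.1 + q.2 ∈ cbox m)),
      (∑ p ∈ Finset.HasAntidiagonal.antidiagonal γ,
        (MvPowerSeries.coeff q.1 f * MvPowerSeries.coeff q.2 g) * (c p.1 q.1 * c p.2 q.2)) = 0 := by
    intro q hq
    rw [Finset.mem_sdiff, Finset.mem_filter] at hq
    have hnot : q.1 + q.2 ∉ cbox (σ := σ) m := fun h => hq.2 ⟨hq.1, h⟩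
    refine Finset.sum_eq_zero fun p hp => ?_
    rw [Finset.HasAntidiagonal.mem_antidiagonal] at hp
    have hmsum : msize p.1 + msize p.2 = m := by rw [← msize_add, hp]
    have : ¬ (∀ s, (q.1 + q.2) s ≤ m) := fun h => hnot (mem_cbox.mpr h)
    push_neg at this
    obtain ⟨s, hs⟩ := this
    have hbig : msize q.1 + msize q.2 > m := by
      have h1 := apply_le_msize q.1 s
      have h2 := apply_le_msize q.2 s
      have : (q.1 + q.2) s = q.1 s + q.2 s := rfl
      omega
    rcases Nat.lt_or_ge (msize p.1) (msize q.1) with h1 | h1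
    · simp only [hc, coeff_prod_pow_eq_zero ha h1, mul_zero, zero_mul]
    · have h2 : msize p.2 < msize q.2 := by omega
      simp only [hc, coeff_prod_pow_eq_zero ha h2, mul_zero, zero_mul]
  have lhs2 : MvPowerSeries.coeff γ (substC a (f * g)) =
      ∑ q ∈ cbox m ×ˢ cbox m, ∑ p ∈ Finset.HasAntidiagonal.antidiagonal γ,
        (MvPowerSeries.coeff q.1 f * MvPowerSeries.coeff q.2 g) * (c p.1 q.1 * c p.2 q.2) := by
    rw [lhs, breindex]
    refine Finset.sum_subset (Finset.filter_subset _ _) ?_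
    intro q hq hq'
    exact bfull q (Finset.mem_sdiff.mpr ⟨hq, hq'⟩)
  -- RHS
  have rhs : MvPowerSeries.coeff γ (substC a f * substC a g) =
      ∑ p ∈ Finset.HasAntidiagonal.antidiagonal γ, ∑ q ∈ cbox m ×ˢ cbox m,
        (MvPowerSeries.coeff q.1 f * MvPowerSeries.coeff q.2 g) * (c p.1 q.1 * c p.2 q.2) := by
    rw [MvPowerSeries.coeff_mul]
    refine Finset.sum_congr rfl fun p hp => ?_
    rw [Finset.HasAntidiagonal.mem_antidiagonal] at hp
    have hm1 : msize p.1 ≤ m := by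
      have := msize_add p.1 p.2
      rw [hp] at this
      omega
    have hm2 : msize p.2 ≤ m := by
      have := msize_add p.1 p.2
      rw [hp] at this
      omega
    rw [coeff_substC_superset ha f p.1 (cbox_mono hm1),
      coeff_substC_superset ha g p.2 (cbox_mono hm2), Finset.sum_mul_sum,
      ← Finset.sum_product']
    refine Finset.sum_congr rfl fun q hq => ?_
    ring
  rw [lhs2, rhs, Finset.sum_comm]

/-- `substC` along a family of power series with zero constant term, as a ring homomorphism. -/
def substCHom [Fintype σ] [DecidableEq σ] [DecidableEq τ]
    (a : σ → MvPowerSeries τ ℂ) (ha : ∀ s, MvPowerSeries.constantCoeff (a s) = 0) :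
    MvPowerSeries σ ℂ →+* MvPowerSeries τ ℂ where
  toFun := substC a
  map_one' := substC_one a
  map_mul' := substC_mul ha
  map_zero' := substC_zero a
  map_add' := substC_add a


section Telescope

variable {ι : Type*} {A : Type*} [CommRing A]

lemma exists_sub_eq_sum [DecidableEq ι] (F : Finset ι) (a b : ι → A) :
    ∃ w : ι → A, (∏ i ∈ F, a i) - (∏ i ∈ F, b i) = ∑ i ∈ F, (a i - b i) * w i := by
  classical
  induction F using Finset.induction_on with
  | empty => exact ⟨fun _ => 0, by simp⟩
  | insert t F hnot ih =>
      obtain ⟨w, hw⟩ := ih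
      refine ⟨fun i => if i = t then ∏ i ∈ F, a i else b t * w i, ?_⟩
      rw [Finset.prod_insert hnot, Finset.prod_insert hnot, Finset.sum_insert hnot]
      have : a t * ∏ i ∈ F, a i - b t * ∏ i ∈ F, b i
          = (a t - b t) * ∏ i ∈ F, a i + b t * ((∏ i ∈ F, a i) - ∏ i ∈ F, b i) := by ring
      rw [this, hw, Finset.mul_sum]
      beta_reduce
      rw [if_pos rfl]
      congr 1
      refine Finset.sum_congr rfl fun i hi => ?_
      rw [if_neg (by rintro rfl; exact hnot hi)]
      ring

lemma prod_sub_prod_eq [DecidableEq ι] [LinearOrder ι] (F : Finset ι) (a b : ι → A) :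
    (∏ i ∈ F, a i) - (∏ i ∈ F, b i) =
      ∑ i ∈ F, (∏ j ∈ F.filter (· < i), a j) * (a i - b i) * (∏ j ∈ F.filter (i < ·), b j) := by
  induction F using Finset.induction_on_max with
  | empty => simp
  | insert t F ht ih =>
      have hnot : t ∉ F := fun h => lt_irrefl t (ht t h)
      rw [Finset.prod_insert hnot, Finset.prod_insert hnot, Finset.sum_insert hnot]
      have : a t * ∏ i ∈ F, a i - b t * ∏ i ∈ F, b i
          = (a t - b t) * ∏ i ∈ F, a i + b t * ((∏ i ∈ F, a i) - ∏ i ∈ F, b i) := by ring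
      rw [this, ih]
      have h1 : (insert t F).filter (· < t) = F :=
        by
          rw [Finset.filter_insert, if_neg (lt_irrefl t)]
          exact Finset.filter_true_of_mem fun x hx => ht x hx
      have h2 : (insert t F).filter (t < ·) = (∅ : Finset ι) :=
        by
          rw [Finset.filter_insert, if_neg (lt_irrefl t)]
          refine Finset.filter_false_of_mem fun x hx => ?_
          exact not_lt_of_gt (ht x hx)
      rw [h1, h2]
      simp only [Finset.prod_empty, mul_one]
      rw [Finset.mul_sum]
      congr 1
      · ring
      refine Finset.sum_congr rfl fun i hi => ?_
      have h3 : (insert t F).filter (· < i) = F.filter (· < i) := by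
        rw [Finset.filter_insert, if_neg (not_lt_of_gt (ht i hi))]
      have h4 : (insert t F).filter (i < ·) = insert t (F.filter (i < ·)) := by
        rw [Finset.filter_insert, if_pos (ht i hi)]
      rw [h3, h4, Finset.prod_insert (fun h => hnot (Finset.mem_of_mem_filter _ h))]
      ring

end Telescope

section Splits

variable [Fintype σ] [LinearOrder σ]

lemma sum_split (α : σ →₀ ℕ) (s : σ) :
    (∑ s' ∈ Finset.univ.filter (· < s), α s') + α s
      + (∑ s' ∈ Finset.univ.filter (s < ·), α s') = msize α := by
  classical
  rw [msize_fintype]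
  rw [← Finset.sum_filter_add_sum_filter_not Finset.univ (· < s) (fun s' => α s')]
  have : Finset.univ.filter (fun x => ¬ x < s) = insert s (Finset.univ.filter (s < ·)) := by
    ext x
    simp only [Finset.mem_filter, Finset.mem_univ, true_and, Finset.mem_insert, not_lt]
    constructor
    · intro h
      rcases eq_or_lt_of_le h with h' | h'
      · exact Or.inl h'.symm
      · exact Or.inr h'
    · rintro (rfl | h)
      · exact le_refl x
      · exact le_of_lt h
  rw [this, Finset.sum_insert (by simp)]
  ring

lemma prod_split {A : Type*} [CommMonoid A] (g : σ → A) (s : σ) :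
    (∏ s' ∈ Finset.univ.filter (· < s), g s') * g s
      * (∏ s' ∈ Finset.univ.filter (s < ·), g s') = ∏ s', g s' := by
  classical
  rw [← Finset.prod_filter_mul_prod_filter_not Finset.univ (· < s) g]
  have : Finset.univ.filter (fun x => ¬ x < s) = insert s (Finset.univ.filter (s < ·)) := by
    ext x
    simp only [Finset.mem_filter, Finset.mem_univ, true_and, Finset.mem_insert, not_lt]
    constructor
    · intro h
      rcases eq_or_lt_of_le h with h' | h'
      · exact Or.inl h'.symm
      · exact Or.inr h'
    · rintro (rfl | h)
      · exact le_refl x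
      · exact le_of_lt h
  rw [this, Finset.prod_insert (by simp), mul_assoc]

end Splits




lemma coeff_pd (s : σ) (f : MvPowerSeries σ ℂ) (α : σ →₀ ℕ) :
    MvPowerSeries.coeff α (pd s f) =
      ((α s : ℂ) + 1) * MvPowerSeries.coeff (α + Finsupp.single s 1) f := by
  show (((Finsupp.single s 1).prod fun i k => (α i + k).choose k * k.factorial : ℕ) : ℂ) *
    MvPowerSeries.coeff (α + Finsupp.single s 1) f = _
  rw [Finsupp.prod_single_index (by simp)]
  norm_num

section SpanVanish

variable {ψ : σ → MvPowerSeries τ ℂ}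

lemma coeff_eq_zero_of_mem_span [DecidableEq τ] {x : MvPowerSeries τ ℂ}
    (hx : x ∈ Ideal.span (Set.range ψ)) {γ : τ →₀ ℕ}
    (hψ : ∀ γ' ≤ γ, ∀ s', MvPowerSeries.coeff γ' (ψ s') = 0) :
    MvPowerSeries.coeff γ x = 0 := by
  have main : ∀ γ' ≤ γ, MvPowerSeries.coeff γ' x = 0 := by
    induction hx using Submodule.span_induction with
    | mem y hy =>
        obtain ⟨s', rfl⟩ := hy
        intro γ' hγ'
        exact hψ γ' hγ' s'
    | zero => intro γ' _; simp
    | add y z hy hz ihy ihz =>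
        intro γ' hγ'
        rw [map_add, ihy γ' hγ', ihz γ' hγ', add_zero]
    | smul a y hy ihy =>
        intro γ' hγ'
        rw [smul_eq_mul, MvPowerSeries.coeff_mul]
        refine Finset.sum_eq_zero fun p hp => ?_
        rw [Finset.HasAntidiagonal.mem_antidiagonal] at hp
        have : p.2 ≤ γ' := hp ▸ le_add_self
        rw [ihy p.2 (le_trans this hγ'), mul_zero]
  exact main γ le_rfl

end SpanVanish

section Factor

variable [Fintype σ] [DecidableEq σ] [LinearOrder σ] [DecidableEq τ]
variable (u v : σ → MvPowerSeries τ ℂ)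

/-- The "divided difference" factor appearing in the telescoping of a product of powers. -/
def hser (α : σ →₀ ℕ) (s : σ) : MvPowerSeries τ ℂ :=
  (∏ s' ∈ Finset.univ.filter (· < s), (u s') ^ (α s')) *
    (∑ j ∈ Finset.range (α s), (u s) ^ j * (v s) ^ (α s - 1 - j)) *
    (∏ s' ∈ Finset.univ.filter (s < ·), (v s') ^ (α s'))

lemma tele (α : σ →₀ ℕ) :
    (∏ s, (u s) ^ (α s)) - (∏ s, (v s) ^ (α s)) = ∑ s, (u s - v s) * hser u v α s := by
  rw [prod_sub_prod_eq Finset.univ (fun s => (u s) ^ (α s)) (fun s => (v s) ^ (α s))]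
  refine Finset.sum_congr rfl fun s _ => ?_
  rw [hser, ← geom_sum₂_mul (u s) (v s) (α s)]
  ring

lemma hser_ord (hu : ∀ s, MvPowerSeries.constantCoeff (u s) = 0)
    (hv : ∀ s, MvPowerSeries.constantCoeff (v s) = 0) (α : σ →₀ ℕ) (s : σ) :
    ordGE (msize α - 1) (hser u v α s) := by
  have h1 : ordGE (∑ s' ∈ Finset.univ.filter (· < s), α s')
      (∏ s' ∈ Finset.univ.filter (· < s), (u s') ^ (α s')) :=
    ordGE.prod _ _ _ fun i _ => by simpa using (ordGE_one (hu i)).pow (α i)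
  have h3 : ordGE (∑ s' ∈ Finset.univ.filter (s < ·), α s')
      (∏ s' ∈ Finset.univ.filter (s < ·), (v s') ^ (α s')) :=
    ordGE.prod _ _ _ fun i _ => by simpa using (ordGE_one (hv i)).pow (α i)
  have h2 : ordGE (α s - 1) (∑ j ∈ Finset.range (α s), (u s) ^ j * (v s) ^ (α s - 1 - j)) := by
    refine ordGE_sum _ _ fun j hj => ?_
    rw [Finset.mem_range] at hj
    have hj1 : ordGE (j * 1) ((u s) ^ j) := (ordGE_one (hu s)).pow j
    have hj2 : ordGE ((α s - 1 - j) * 1) ((v s) ^ (α s - 1 - j)) := (ordGE_one (hv s)).pow _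
    have := hj1.mul hj2
    exact this.mono (by omega)
  have := (h1.mul h2).mul h3
  refine this.mono ?_
  have := sum_split α s
  omega

/-- The coefficient series of the telescoping decomposition of a substitution difference. -/
def Cser (f : MvPowerSeries σ ℂ) (s : σ) : MvPowerSeries τ ℂ :=
  fun γ => ∑ α ∈ cbox (msize γ + 1),
    MvPowerSeries.coeff α f * MvPowerSeries.coeff γ (hser u v α s)

lemma coeff_Cser (f : MvPowerSeries σ ℂ) (s : σ) (γ : τ →₀ ℕ) :
    MvPowerSeries.coeff γ (Cser u v f s) = ∑ α ∈ cbox (msize γ + 1),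
      MvPowerSeries.coeff α f * MvPowerSeries.coeff γ (hser u v α s) := rfl

lemma substC_sub_eq (hu : ∀ s, MvPowerSeries.constantCoeff (u s) = 0)
    (hv : ∀ s, MvPowerSeries.constantCoeff (v s) = 0) (f : MvPowerSeries σ ℂ) :
    substC u f - substC v f = ∑ s, (u s - v s) * Cser u v f s := by
  ext γ
  have lhs : MvPowerSeries.coeff γ (substC u f - substC v f)
      = ∑ α ∈ cbox (msize γ), ∑ s, ∑ p ∈ Finset.HasAntidiagonal.antidiagonal γ,
          MvPowerSeries.coeff α f * (MvPowerSeries.coeff p.1 (u s - v s) *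
            MvPowerSeries.coeff p.2 (hser u v α s)) := by
    rw [map_sub, coeff_substC, coeff_substC, ← Finset.sum_sub_distrib]
    refine Finset.sum_congr rfl fun α _ => ?_
    rw [← mul_sub, ← map_sub, tele u v α, map_sum, Finset.mul_sum]
    refine Finset.sum_congr rfl fun s _ => ?_
    rw [MvPowerSeries.coeff_mul, Finset.mul_sum]
  have rhs : MvPowerSeries.coeff γ (∑ s, (u s - v s) * Cser u v f s)
      = ∑ s, ∑ p ∈ Finset.HasAntidiagonal.antidiagonal γ, ∑ α ∈ cbox (msize p.2 + 1),
          MvPowerSeries.coeff α f * (MvPowerSeries.coeff p.1 (u s - v s) *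
            MvPowerSeries.coeff p.2 (hser u v α s)) := by
    rw [map_sum]
    refine Finset.sum_congr rfl fun s _ => ?_
    rw [MvPowerSeries.coeff_mul]
    refine Finset.sum_congr rfl fun p _ => ?_
    rw [coeff_Cser, Finset.mul_sum]
    refine Finset.sum_congr rfl fun α _ => ?_
    ring
  rw [lhs, rhs]
  rw [Finset.sum_comm]
  refine Finset.sum_congr rfl fun s _ => ?_
  rw [Finset.sum_comm]
  refine Finset.sum_congr rfl fun p hp => ?_
  rw [Finset.HasAntidiagonal.mem_antidiagonal] at hp
  by_cases h0 : p.1 = 0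
  · have hz : MvPowerSeries.coeff p.1 (u s - v s) = 0 := by
      rw [h0, map_sub]
      rw [MvPowerSeries.coeff_zero_eq_constantCoeff]
      rw [hu s, hv s, sub_zero]
    simp [hz]
  · have hge : 1 ≤ msize p.1 := by
      rcases Nat.eq_zero_or_pos (msize p.1) with h | h
      · exact absurd (msize_eq_zero.mp h) h0
      · omega
    have hlt : msize p.2 + 1 ≤ msize γ := by
      have := msize_add p.1 p.2
      rw [hp] at this
      omega
    symm
    refine Finset.sum_subset (cbox_mono hlt) fun α hα hα' => ?_
    have : ¬ (∀ s', α s' ≤ msize p.2 + 1) := fun h => hα' (mem_cbox.mpr h)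
    push_neg at this
    obtain ⟨s', hs'⟩ := this
    have hbig : msize p.2 < msize α - 1 := by
      have := apply_le_msize α s'
      omega
    rw [hser_ord u v hu hv α s p.2 hbig]
    ring

lemma hser_sub_mem (α : σ →₀ ℕ) (s : σ) :
    hser u v α s - hser v v α s ∈ Ideal.span (Set.range (fun s' => u s' - v s')) := by
  set I := Ideal.span (Set.range (fun s' => u s' - v s')) with hI
  have hpow : ∀ (s' : σ) (n : ℕ), (u s') ^ n - (v s') ^ n ∈ I := by
    intro s' n
    rw [← geom_sum₂_mul (u s') (v s') n]
    exact Ideal.mul_mem_left _ _ (Ideal.subset_span ⟨s', rfl⟩)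
  have hP : (∏ s' ∈ Finset.univ.filter (· < s), (u s') ^ (α s'))
      - (∏ s' ∈ Finset.univ.filter (· < s), (v s') ^ (α s')) ∈ I := by
    obtain ⟨w, hw⟩ := exists_sub_eq_sum (Finset.univ.filter (· < s))
      (fun s' => (u s') ^ (α s')) (fun s' => (v s') ^ (α s'))
    rw [hw]
    exact Ideal.sum_mem _ fun i _ => Ideal.mul_mem_right _ _ (hpow i (α i))
  have hG : (∑ j ∈ Finset.range (α s), (u s) ^ j * (v s) ^ (α s - 1 - j))
      - (∑ j ∈ Finset.range (α s), (v s) ^ j * (v s) ^ (α s - 1 - j)) ∈ I := by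
    rw [← Finset.sum_sub_distrib]
    refine Ideal.sum_mem _ fun j _ => ?_
    rw [← sub_mul]
    exact Ideal.mul_mem_right _ _ (hpow s j)
  have key : hser u v α s - hser v v α s
      = ((∏ s' ∈ Finset.univ.filter (· < s), (u s') ^ (α s'))
          - (∏ s' ∈ Finset.univ.filter (· < s), (v s') ^ (α s')))
        * ((∑ j ∈ Finset.range (α s), (u s) ^ j * (v s) ^ (α s - 1 - j))
            * (∏ s' ∈ Finset.univ.filter (s < ·), (v s') ^ (α s')))
      + ((∑ j ∈ Finset.range (α s), (u s) ^ j * (v s) ^ (α s - 1 - j))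
          - (∑ j ∈ Finset.range (α s), (v s) ^ j * (v s) ^ (α s - 1 - j)))
        * ((∏ s' ∈ Finset.univ.filter (· < s), (v s') ^ (α s'))
            * (∏ s' ∈ Finset.univ.filter (s < ·), (v s') ^ (α s'))) := by
    rw [hser, hser]
    ring
  rw [key]
  exact Ideal.add_mem _ (Ideal.mul_mem_right _ _ hP) (Ideal.mul_mem_right _ _ hG)

lemma hser_self (α : σ →₀ ℕ) (s : σ) :
    hser v v α s = (α s) • ∏ s', (v s') ^ ((α - Finsupp.single s 1 : σ →₀ ℕ) s') := by
  rcases Nat.eq_zero_or_pos (α s) with h | h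
  · rw [hser, h]
    simp
  · have hG : (∑ j ∈ Finset.range (α s), (v s) ^ j * (v s) ^ (α s - 1 - j))
        = (α s) • (v s) ^ (α s - 1) := by
      rw [Finset.sum_congr rfl (fun j hj => ?_), Finset.sum_const, Finset.card_range]
      rw [← pow_add]
      congr 1
      rw [Finset.mem_range] at hj
      omega
    rw [hser, hG]
    rw [← prod_split (fun s' => (v s') ^ ((α - Finsupp.single s 1 : σ →₀ ℕ) s')) s]
    have e1 : ∀ s', s' ≠ s → (α - Finsupp.single s 1 : σ →₀ ℕ) s' = α s' := by
      intro s' hs'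
      rw [Finsupp.tsub_apply, Finsupp.single_apply, if_neg (Ne.symm hs')]
      omega
    have e2 : (α - Finsupp.single s 1 : σ →₀ ℕ) s = α s - 1 := by
      rw [Finsupp.tsub_apply, Finsupp.single_apply, if_pos rfl]
    have p1 : (∏ s' ∈ Finset.univ.filter (· < s),
          (v s') ^ ((α - Finsupp.single s 1 : σ →₀ ℕ) s'))
        = ∏ s' ∈ Finset.univ.filter (· < s), (v s') ^ (α s') := by
      refine Finset.prod_congr rfl fun s' hs' => ?_
      rw [e1 s' (ne_of_lt (Finset.mem_filter.mp hs').2)]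
    have p2 : (∏ s' ∈ Finset.univ.filter (s < ·),
          (v s') ^ ((α - Finsupp.single s 1 : σ →₀ ℕ) s'))
        = ∏ s' ∈ Finset.univ.filter (s < ·), (v s') ^ (α s') := by
      refine Finset.prod_congr rfl fun s' hs' => ?_
      rw [e1 s' (ne_of_gt (Finset.mem_filter.mp hs').2)]
    rw [p1, p2, e2]
    rw [nsmul_eq_mul, nsmul_eq_mul]
    ring

lemma coeff_Cser_eq_pd (hv : ∀ s, MvPowerSeries.constantCoeff (v s) = 0)
    (f : MvPowerSeries σ ℂ) (s : σ) (γ : τ →₀ ℕ)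
    (hψ : ∀ γ' ≤ γ, ∀ s', MvPowerSeries.coeff γ' (u s' - v s') = 0) :
    MvPowerSeries.coeff γ (Cser u v f s) = MvPowerSeries.coeff γ (substC v (pd s f)) := by
  classical
  have stepA : MvPowerSeries.coeff γ (Cser u v f s)
      = MvPowerSeries.coeff γ (Cser v v f s) := by
    rw [coeff_Cser, coeff_Cser]
    refine Finset.sum_congr rfl fun α _ => ?_
    congr 1
    have h0 := coeff_eq_zero_of_mem_span (hser_sub_mem u v α s) hψ
    rw [map_sub, sub_eq_zero] at h0
    exact h0
  rw [stepA]
  set m := msize γ with hm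
  set es := Finsupp.single s 1 with hes
  set G : (σ →₀ ℕ) → ℂ := fun β => (β s : ℂ) * MvPowerSeries.coeff β f *
    MvPowerSeries.coeff γ (∏ s', (v s') ^ ((β - es : σ →₀ ℕ) s')) with hGdef
  have hGapp : ∀ β : σ →₀ ℕ, G β = (β s : ℂ) * MvPowerSeries.coeff β f *
      MvPowerSeries.coeff γ (∏ s', (v s') ^ ((β - es : σ →₀ ℕ) s')) := fun β => rfl
  have hL : MvPowerSeries.coeff γ (Cser v v f s) = ∑ α ∈ cbox (m + 1), G α := by
    rw [coeff_Cser]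
    refine Finset.sum_congr rfl fun α _ => ?_
    rw [hser_self, map_nsmul, nsmul_eq_mul, hGapp]
    ring
  have hR : MvPowerSeries.coeff γ (substC v (pd s f)) = ∑ α ∈ cbox m, G (α + es) := by
    rw [coeff_substC]
    refine Finset.sum_congr rfl fun α _ => ?_
    rw [coeff_pd, hGapp, add_tsub_cancel_right]
    have h1 : (α + es) s = α s + 1 := by
      rw [Finsupp.add_apply, hes, Finsupp.single_eq_same]
    rw [h1]
    push_cast
    ring
  rw [hL, hR]
  have hinj : Function.Injective (fun x : σ →₀ ℕ => x + es) := add_left_injective es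
  have himage : ∑ β ∈ (cbox m).image (fun x => x + es), G β = ∑ α ∈ cbox m, G (α + es) :=
    Finset.sum_image (fun x _ y _ h => hinj h)
  rw [← himage]
  refine (Finset.sum_subset ?_ ?_).symm
  · intro β hβ
    rw [Finset.mem_image] at hβ
    obtain ⟨α, hα, rfl⟩ := hβ
    refine mem_cbox.mpr fun s' => ?_
    have h2 := mem_cbox.mp hα s'
    have h3 : (α + es) s' = α s' + es s' := rfl
    have hle : es s' ≤ 1 := by
      rw [hes, Finsupp.single_apply]
      split <;> omega
    rw [h3]
    omega
  · intro β hβ hβ'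
    rcases Nat.eq_zero_or_pos (β s) with h | h
    · rw [hGapp, h]
      simp
    · have hesle : es ≤ β := by
        rw [hes]
        exact Finsupp.single_le_iff.mpr h
      have hnot : β - es ∉ cbox (σ := σ) m := by
        intro hmem
        refine hβ' (Finset.mem_image.mpr ⟨β - es, hmem, ?_⟩)
        exact tsub_add_cancel_of_le hesle
      have : ¬ (∀ s', (β - es : σ →₀ ℕ) s' ≤ m) := fun hh => hnot (mem_cbox.mpr hh)
      push_neg at this
      obtain ⟨s', hs'⟩ := this
      have hbig : msize γ < msize (β - es) := by
        have := apply_le_msize (β - es) s'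
        omega
      rw [hGapp, coeff_prod_pow_eq_zero hv hbig]
      simp

end Factor


section Det

lemma coeff_det_sub [DecidableEq τ] {N : ℕ} (M P : Matrix (Fin N) (Fin N) (MvPowerSeries τ ℂ))
    (γ₀ : τ →₀ ℕ)
    (h : ∀ i l, ∀ γ ≤ γ₀, MvPowerSeries.coeff γ (M i l - P i l) = 0) :
    MvPowerSeries.coeff γ₀ M.det = MvPowerSeries.coeff γ₀ P.det := by
  rw [← sub_eq_zero, ← map_sub, Matrix.det_apply', Matrix.det_apply',
    ← Finset.sum_sub_distrib, map_sum]
  refine Finset.sum_eq_zero fun g _ => ?_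
  rw [← mul_sub]
  obtain ⟨w, hw⟩ := exists_sub_eq_sum Finset.univ (fun i => M (g i) i) (fun i => P (g i) i)
  rw [hw, Finset.mul_sum, map_sum]
  refine Finset.sum_eq_zero fun i _ => ?_
  have : ((Equiv.Perm.sign g : ℤ) : MvPowerSeries τ ℂ) * ((M (g i) i - P (g i) i) * w i)
      = (M (g i) i - P (g i) i) * (((Equiv.Perm.sign g : ℤ) : MvPowerSeries τ ℂ) * w i) := by
    ring
  rw [this, MvPowerSeries.coeff_mul]
  refine Finset.sum_eq_zero fun p hp => ?_
  rw [Finset.HasAntidiagonal.mem_antidiagonal] at hp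
  have hle : p.1 ≤ γ₀ := by
    rw [← hp]
    exact self_le_add_right _ _
  rw [h (g i) i p.1 hle, zero_mul]

end Det

section TSize

variable {A B : Type*} [Fintype A] [Fintype B]

def tsizeS (γ : (A ⊕ B) →₀ ℕ) : ℕ := ∑ b : B, γ (Sum.inr b)

def xsizeS (γ : (A ⊕ B) →₀ ℕ) : ℕ := ∑ a : A, γ (Sum.inl a)

lemma tsizeS_add (γ1 γ2 : (A ⊕ B) →₀ ℕ) : tsizeS (γ1 + γ2) = tsizeS γ1 + tsizeS γ2 := by
  simp [tsizeS, Finset.sum_add_distrib]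

lemma xsizeS_add (γ1 γ2 : (A ⊕ B) →₀ ℕ) : xsizeS (γ1 + γ2) = xsizeS γ1 + xsizeS γ2 := by
  simp [xsizeS, Finset.sum_add_distrib]

lemma tsizeS_mono {γ1 γ2 : (A ⊕ B) →₀ ℕ} (h : γ1 ≤ γ2) : tsizeS γ1 ≤ tsizeS γ2 :=
  Finset.sum_le_sum fun b _ => Finsupp.le_def.mp h _

lemma xsizeS_mono {γ1 γ2 : (A ⊕ B) →₀ ℕ} (h : γ1 ≤ γ2) : xsizeS γ1 ≤ xsizeS γ2 :=
  Finset.sum_le_sum fun a _ => Finsupp.le_def.mp h _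

lemma tsizeS_mapDomain_inl (a : A →₀ ℕ) :
    tsizeS (Finsupp.mapDomain (Sum.inl : A → A ⊕ B) a) = 0 := by
  refine Finset.sum_eq_zero fun b _ => ?_
  exact Finsupp.mapDomain_notin_range _ _ (by simp)

lemma tsizeS_mapDomain_inr (b : B →₀ ℕ) :
    tsizeS (Finsupp.mapDomain (Sum.inr : B → A ⊕ B) b) = msize b := by
  rw [msize_fintype]
  refine Finset.sum_congr rfl fun x _ => ?_
  exact Finsupp.mapDomain_apply Sum.inr_injective b x

lemma xsizeS_mapDomain_inl (a : A →₀ ℕ) :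
    xsizeS (Finsupp.mapDomain (Sum.inl : A → A ⊕ B) a) = msize a := by
  rw [msize_fintype]
  refine Finset.sum_congr rfl fun x _ => ?_
  exact Finsupp.mapDomain_apply Sum.inl_injective a x

lemma xsizeS_mapDomain_inr (b : B →₀ ℕ) :
    xsizeS (Finsupp.mapDomain (Sum.inr : B → A ⊕ B) b) = 0 := by
  refine Finset.sum_eq_zero fun a _ => ?_
  exact Finsupp.mapDomain_notin_range _ _ (by simp)

/-- Restriction of a multi-index on a sum type to the left factor. -/
def restL (γ : (A ⊕ B) →₀ ℕ) : A →₀ ℕ :=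
  Finsupp.comapDomain Sum.inl γ Sum.inl_injective.injOn

/-- Restriction of a multi-index on a sum type to the right factor. -/
def restR (γ : (A ⊕ B) →₀ ℕ) : B →₀ ℕ :=
  Finsupp.comapDomain Sum.inr γ Sum.inr_injective.injOn

lemma decompSum (γ : (A ⊕ B) →₀ ℕ) :
    γ = Finsupp.mapDomain Sum.inl (restL γ) + Finsupp.mapDomain Sum.inr (restR γ) := by
  ext v
  rw [Finsupp.add_apply]
  cases v with
  | inl a =>
      rw [Finsupp.mapDomain_apply Sum.inl_injective,
        Finsupp.mapDomain_notin_range _ _ (by simp), restL, Finsupp.comapDomain_apply, add_zero]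
  | inr b =>
      rw [Finsupp.mapDomain_apply Sum.inr_injective,
        Finsupp.mapDomain_notin_range _ _ (by simp), restR, Finsupp.comapDomain_apply, zero_add]

lemma msize_restL (γ : (A ⊕ B) →₀ ℕ) : msize (restL γ) = xsizeS γ := by
  rw [msize_fintype]
  rfl

lemma msize_restR (γ : (A ⊕ B) →₀ ℕ) : msize (restR γ) = tsizeS γ := by
  rw [msize_fintype]
  rfl

end TSize

section Level

variable {A B : Type*} [Fintype A] [Fintype B] [DecidableEq A] [DecidableEq B]

lemma mul_tvanish {f g : MvPowerSeries (A ⊕ B) ℂ} {b k : ℕ}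
    (hf : ∃ γ₀, tsizeS γ₀ ≤ b ∧ MvPowerSeries.coeff γ₀ f ≠ 0)
    (hfg : ∀ γ, tsizeS γ ≤ b + k → MvPowerSeries.coeff γ (f * g) = 0) :
    ∀ γ, tsizeS γ ≤ k → MvPowerSeries.coeff γ g = 0 := by
  classical
  by_contra hcon
  push_neg at hcon
  obtain ⟨γg, hγgk, hγg⟩ := hcon
  obtain ⟨γ₀, hγ₀b, hγ₀⟩ := hf
  have hfex : ∃ j, ∃ γ, tsizeS γ = j ∧ MvPowerSeries.coeff γ f ≠ 0 := ⟨_, γ₀, rfl, hγ₀⟩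
  have hgex : ∃ j, ∃ γ, tsizeS γ = j ∧ MvPowerSeries.coeff γ g ≠ 0 := ⟨_, γg, rfl, hγg⟩
  set c := Nat.find hfex with hc
  set m := Nat.find hgex with hm
  have hcle : c ≤ b := by
    have := Nat.find_min' hfex (⟨γ₀, rfl, hγ₀⟩ : ∃ γ, tsizeS γ = tsizeS γ₀ ∧
      MvPowerSeries.coeff γ f ≠ 0)
    omega
  have hmle : m ≤ k := by
    have := Nat.find_min' hgex (⟨γg, rfl, hγg⟩ : ∃ γ, tsizeS γ = tsizeS γg ∧
      MvPowerSeries.coeff γ g ≠ 0)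
    omega
  have hfmin : ∀ γ : (A ⊕ B) →₀ ℕ, tsizeS γ < c → MvPowerSeries.coeff γ f = 0 := by
    intro γ hγ
    by_contra hne
    exact Nat.find_min hfex hγ ⟨γ, rfl, hne⟩
  have hgmin : ∀ γ : (A ⊕ B) →₀ ℕ, tsizeS γ < m → MvPowerSeries.coeff γ g = 0 := by
    intro γ hγ
    by_contra hne
    exact Nat.find_min hgex hγ ⟨γ, rfl, hne⟩
  obtain ⟨γc, hγc, hγcne⟩ := Nat.find_spec hfex
  obtain ⟨γm, hγm, hγmne⟩ := Nat.find_spec hgex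
  -- level projections
  set F : MvPowerSeries (A ⊕ B) ℂ := fun γ => if tsizeS γ = c then f γ else 0 with hF
  set G : MvPowerSeries (A ⊕ B) ℂ := fun γ => if tsizeS γ = m then g γ else 0 with hG
  have hcoeffF : ∀ γ, MvPowerSeries.coeff γ F = if tsizeS γ = c then
      MvPowerSeries.coeff γ f else 0 := fun γ => rfl
  have hcoeffG : ∀ γ, MvPowerSeries.coeff γ G = if tsizeS γ = m then
      MvPowerSeries.coeff γ g else 0 := fun γ => rfl
  have hFne : F ≠ 0 := by
    intro h0
    apply hγcne
    have := congrFun h0 γc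
    rw [hF] at this
    simp only [if_pos hγc] at this
    exact (if_pos hγc).symm.trans this
  have hGne : G ≠ 0 := by
    intro h0
    apply hγmne
    have := congrFun h0 γm
    rw [hG] at this
    simp only [if_pos hγm] at this
    exact (if_pos hγm).symm.trans this
  have hprod : F * G ≠ 0 := mul_ne_zero hFne hGne
  obtain ⟨γs, hγs⟩ : ∃ γs, MvPowerSeries.coeff γs (F * G) ≠ 0 := by
    by_contra hall
    push_neg at hall
    exact hprod (MvPowerSeries.ext fun γ => by rw [hall γ, map_zero])
  -- the level of γs is c + m
  have hlev : tsizeS γs = c + m := by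
    rw [MvPowerSeries.coeff_mul] at hγs
    obtain ⟨p, hp, hpne⟩ := Finset.exists_ne_zero_of_sum_ne_zero hγs
    rw [Finset.HasAntidiagonal.mem_antidiagonal] at hp
    have h1 : tsizeS p.1 = c := by
      by_contra hne
      rw [hcoeffF, if_neg hne, zero_mul] at hpne
      exact hpne rfl
    have h2 : tsizeS p.2 = m := by
      by_contra hne
      rw [hcoeffG, if_neg hne, mul_zero] at hpne
      exact hpne rfl
    rw [← hp, tsizeS_add, h1, h2]
  -- coefficients agree with those of f * g at level c + m
  have hsame : MvPowerSeries.coeff γs (F * G) = MvPowerSeries.coeff γs (f * g) := by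
    rw [MvPowerSeries.coeff_mul, MvPowerSeries.coeff_mul]
    refine Finset.sum_congr rfl fun p hp => ?_
    rw [Finset.HasAntidiagonal.mem_antidiagonal] at hp
    have hpsum : tsizeS p.1 + tsizeS p.2 = c + m := by rw [← tsizeS_add, hp, hlev]
    by_cases h1 : tsizeS p.1 = c
    · have h2 : tsizeS p.2 = m := by omega
      rw [hcoeffF, hcoeffG, if_pos h1, if_pos h2]
    · rcases Nat.lt_or_ge (tsizeS p.1) c with hlt | hgt
      · rw [hcoeffF, if_neg h1, zero_mul, hfmin p.1 hlt, zero_mul]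
      · have h2 : tsizeS p.2 < m := by omega
        rw [hcoeffG, if_neg (by omega), mul_zero, hgmin p.2 h2, mul_zero]
  apply hγs
  rw [hsame]
  exact hfg γs (by omega)

end Level


section Dpow


lemma coeff_dpow (β : σ →₀ ℕ) (f : MvPowerSeries σ ℂ) (α : σ →₀ ℕ) :
    MvPowerSeries.coeff α (dpow β f) =
      (((β.prod fun i k => (α i + k).choose k * k.factorial) : ℕ) : ℂ) *
        MvPowerSeries.coeff (α + β) f := rfl

lemma dfactor_ne_zero (β α : σ →₀ ℕ) :
    (((β.prod fun i k => (α i + k).choose k * k.factorial) : ℕ) : ℂ) ≠ 0 := by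
  have : 0 < β.prod fun i k => (α i + k).choose k * k.factorial := by
    refine Finset.prod_pos fun i _ => ?_
    have h1 : 0 < (α i + β i).choose (β i) := Nat.choose_pos (by omega)
    have h2 : 0 < (β i).factorial := Nat.factorial_pos _
    exact Nat.mul_pos h1 h2
  exact Nat.cast_ne_zero.mpr (by omega)

lemma dpow_const_cancel {B : σ →₀ ℕ} {f g : MvPowerSeries σ ℂ}
    (h : MvPowerSeries.constantCoeff (dpow B f) = MvPowerSeries.constantCoeff (dpow B g)) :
    MvPowerSeries.coeff B f = MvPowerSeries.coeff B g := by
  rw [← MvPowerSeries.coeff_zero_eq_constantCoeff_apply,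
    ← MvPowerSeries.coeff_zero_eq_constantCoeff_apply, coeff_dpow, coeff_dpow] at h
  have h2 : MvPowerSeries.coeff (0 + B) f = MvPowerSeries.coeff (0 + B) g :=
    mul_left_cancel₀ (dfactor_ne_zero B 0) h
  rwa [zero_add] at h2

lemma dAt0_eq_iff {e : σ → τ} {β : τ →₀ ℕ} {f g : MvPowerSeries τ ℂ} :
    dAt0 e β f = dAt0 e β g ↔ ∀ γ : σ →₀ ℕ,
      MvPowerSeries.coeff (Finsupp.mapDomain e γ + β) f =
        MvPowerSeries.coeff (Finsupp.mapDomain e γ + β) g := by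
  constructor
  · intro h γ
    have h1 : MvPowerSeries.coeff (Finsupp.mapDomain e γ) (dpow β f)
        = MvPowerSeries.coeff (Finsupp.mapDomain e γ) (dpow β g) := congrFun h γ
    rw [coeff_dpow, coeff_dpow] at h1
    exact mul_left_cancel₀ (dfactor_ne_zero β (Finsupp.mapDomain e γ)) h1
  · intro h
    funext γ
    show MvPowerSeries.coeff (Finsupp.mapDomain e γ) (dpow β f)
      = MvPowerSeries.coeff (Finsupp.mapDomain e γ) (dpow β g)
    rw [coeff_dpow, coeff_dpow, h γ]

end Dpow



-- STATEMENT 16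
theorem stmt_16 (n₁ d N : ℕ) (h1 : 1 ≤ n₁) (h2 : 1 ≤ d) (h3 : 1 ≤ N)
    (P : Fin N → MvPowerSeries (Fin n₁ ⊕ Fin N) ℂ)
    (φ₀ : Fin N → MvPowerSeries (Fin n₁ ⊕ Fin d) ℂ)
    (hφ0 : ∀ i, MvPowerSeries.constantCoeff (φ₀ i) = 0)
    (hdet : substC (fun v : Fin n₁ ⊕ Fin N => match v with
        | Sum.inl i => MvPowerSeries.X (Sum.inl i)
        | Sum.inr i => φ₀ i)
      ((Matrix.of fun i l : Fin N => pd (Sum.inr l) (P i)).det) ≠ 0)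
    (α₀ : Fin n₁ →₀ ℕ) (β₀ : Fin d →₀ ℕ)
    (hα₀β₀ : MvPowerSeries.constantCoeff
      (dpow (Finsupp.mapDomain Sum.inl α₀ + Finsupp.mapDomain Sum.inr β₀)
        (substC (fun v : Fin n₁ ⊕ Fin N => match v with
          | Sum.inl i => MvPowerSeries.X (Sum.inl i)
          | Sum.inr i => φ₀ i)
        ((Matrix.of fun i l : Fin N => pd (Sum.inr l) (P i)).det))) ≠ 0) :
    ∀ φ : Fin N → MvPowerSeries (Fin n₁ ⊕ Fin d) ℂ,
      (∀ (α : Fin n₁ →₀ ℕ) (β : Fin d →₀ ℕ), msize α ≤ msize α₀ → msize β ≤ msize β₀ →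
        ∀ i, MvPowerSeries.constantCoeff
            (dpow (Finsupp.mapDomain Sum.inl α + Finsupp.mapDomain Sum.inr β) (φ i))
          = MvPowerSeries.constantCoeff
            (dpow (Finsupp.mapDomain Sum.inl α + Finsupp.mapDomain Sum.inr β) (φ₀ i))) →
      ∀ k : ℕ,
      (∀ β : Fin d →₀ ℕ, msize β ≤ msize β₀ + k → ∀ i,
        dAt0 (Sum.inl : Fin n₁ → Fin n₁ ⊕ Fin d) (Finsupp.mapDomain Sum.inr β)
          (substC (fun v : Fin n₁ ⊕ Fin N => match v with
            | Sum.inl i' => MvPowerSeries.X (Sum.inl i')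
            | Sum.inr i' => φ i') (P i))
        = dAt0 (Sum.inl : Fin n₁ → Fin n₁ ⊕ Fin d) (Finsupp.mapDomain Sum.inr β)
          (substC (fun v : Fin n₁ ⊕ Fin N => match v with
            | Sum.inl i' => MvPowerSeries.X (Sum.inl i')
            | Sum.inr i' => φ₀ i') (P i))) →
      ∀ β : Fin d →₀ ℕ, msize β ≤ k → ∀ i,
        dAt0 (Sum.inl : Fin n₁ → Fin n₁ ⊕ Fin d) (Finsupp.mapDomain Sum.inr β) (φ i)
        = dAt0 (Sum.inl : Fin n₁ → Fin n₁ ⊕ Fin d) (Finsupp.mapDomain Sum.inr β) (φ₀ i) := by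
  intro φ hjet k hPβ β hβ i
  classical
  letI : LinearOrder (Fin n₁ ⊕ Fin N) := LinearOrder.lift'
    (Sum.elim (fun i : Fin n₁ => (i : ℕ)) (fun l : Fin N => n₁ + (l : ℕ)))
    (by
      rintro (a | a) (b | b) hab <;> simp only [Sum.elim_inl, Sum.elim_inr] at hab
      · exact congrArg Sum.inl (Fin.ext hab)
      · exact absurd hab (by have := a.isLt; omega)
      · exact absurd hab (by have := b.isLt; omega)
      · exact congrArg Sum.inr (Fin.ext (by omega)))
  set u : (Fin n₁ ⊕ Fin N) → MvPowerSeries (Fin n₁ ⊕ Fin d) ℂ := fun w => match w with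
    | Sum.inl i => MvPowerSeries.X (Sum.inl i)
    | Sum.inr i => φ i with hu_def
  set v : (Fin n₁ ⊕ Fin N) → MvPowerSeries (Fin n₁ ⊕ Fin d) ℂ := fun w => match w with
    | Sum.inl i => MvPowerSeries.X (Sum.inl i)
    | Sum.inr i => φ₀ i with hv_def
  -- constant coefficients
  have hφc : ∀ l, MvPowerSeries.constantCoeff (φ l) = 0 := by
    intro l
    have h := hjet 0 0 (by rw [msize_zero]; omega) (by rw [msize_zero]; omega) l
    rw [Finsupp.mapDomain_zero, Finsupp.mapDomain_zero, add_zero] at h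
    have h2 := dpow_const_cancel h
    rw [MvPowerSeries.coeff_zero_eq_constantCoeff_apply,
      MvPowerSeries.coeff_zero_eq_constantCoeff_apply] at h2
    rw [h2]
    exact hφ0 l
  have hu0 : ∀ s, MvPowerSeries.constantCoeff (u s) = 0 := by
    rintro (j | l)
    · show MvPowerSeries.constantCoeff (MvPowerSeries.X (Sum.inl j)) = 0
      exact MvPowerSeries.constantCoeff_X _
    · exact hφc l
  have hv0 : ∀ s, MvPowerSeries.constantCoeff (v s) = 0 := by
    rintro (j | l)
    · show MvPowerSeries.constantCoeff (MvPowerSeries.X (Sum.inl j)) = 0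
      exact MvPowerSeries.constantCoeff_X _
    · exact hφ0 l
  -- box vanishing of ψ = u - v
  have hψbox : ∀ γ' : (Fin n₁ ⊕ Fin d) →₀ ℕ, xsizeS γ' ≤ msize α₀ → tsizeS γ' ≤ msize β₀ →
      ∀ s, MvPowerSeries.coeff γ' (u s - v s) = 0 := by
    intro γ' hx ht s
    rw [map_sub]
    cases s with
    | inl j => rw [sub_eq_zero]
    | inr l =>
        have h := hjet (restL γ') (restR γ') (by rw [msize_restL]; exact hx)
          (by rw [msize_restR]; exact ht) l
        have h2 := dpow_const_cancel h
        rw [← decompSum γ'] at h2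
        show MvPowerSeries.coeff γ' (φ l) - MvPowerSeries.coeff γ' (φ₀ l) = 0
        rw [h2, sub_self]
  set γ₀ : (Fin n₁ ⊕ Fin d) →₀ ℕ :=
    Finsupp.mapDomain Sum.inl α₀ + Finsupp.mapDomain Sum.inr β₀ with hγ₀_def
  have hγ₀x : xsizeS γ₀ = msize α₀ := by
    rw [hγ₀_def, xsizeS_add, xsizeS_mapDomain_inl, xsizeS_mapDomain_inr, add_zero]
  have hγ₀t : tsizeS γ₀ = msize β₀ := by
    rw [hγ₀_def, tsizeS_add, tsizeS_mapDomain_inl, tsizeS_mapDomain_inr, zero_add]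
  set Cmat : Matrix (Fin N) (Fin N) (MvPowerSeries (Fin n₁ ⊕ Fin d) ℂ) :=
    Matrix.of fun i' l => Cser u v (P i') (Sum.inr l) with hCmat_def
  -- coefficient of det at γ₀
  have hA : MvPowerSeries.coeff γ₀ Cmat.det =
      MvPowerSeries.coeff γ₀ (Matrix.of fun i' l => substC v (pd (Sum.inr l) (P i'))).det := by
    refine coeff_det_sub _ _ γ₀ fun i' l γ hγ => ?_
    rw [map_sub, sub_eq_zero]
    show MvPowerSeries.coeff γ (Cser u v (P i') (Sum.inr l)) = _
    refine coeff_Cser_eq_pd u v hv0 (P i') (Sum.inr l) γ fun γ'' hγ'' s => ?_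
    refine hψbox γ'' ?_ ?_ s
    · exact le_trans (xsizeS_mono (le_trans hγ'' hγ)) (le_of_eq hγ₀x)
    · exact le_trans (tsizeS_mono (le_trans hγ'' hγ)) (le_of_eq hγ₀t)
  have hdetmap : substC v ((Matrix.of fun i' l : Fin N => pd (Sum.inr l) (P i')).det)
      = (Matrix.of fun i' l => substC v (pd (Sum.inr l) (P i'))).det := by
    have h := RingHom.map_det (substCHom v hv0) (Matrix.of fun i' l : Fin N => pd (Sum.inr l) (P i'))
    exact h
  have hD0 : MvPowerSeries.coeff γ₀ Cmat.det ≠ 0 := by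
    rw [hA, ← hdetmap]
    intro h0
    apply hα₀β₀
    rw [← MvPowerSeries.coeff_zero_eq_constantCoeff_apply, coeff_dpow, zero_add, h0, mul_zero]
  -- factorization of the substitution difference
  have hfact : ∀ i', substC u (P i') - substC v (P i')
      = ∑ l : Fin N, (φ l - φ₀ l) * Cser u v (P i') (Sum.inr l) := by
    intro i'
    rw [substC_sub_eq u v hu0 hv0 (P i'), Fintype.sum_sum_type]
    have hzero : ∀ j : Fin n₁, (u (Sum.inl j) - v (Sum.inl j)) * Cser u v (P i') (Sum.inl j)
        = 0 := by
      intro j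
      have : u (Sum.inl j) - v (Sum.inl j) = 0 := sub_eq_zero.mpr rfl
      rw [this, zero_mul]
    rw [Finset.sum_eq_zero (fun j _ => hzero j), zero_add]
  -- vanishing of the composed difference coefficients
  have hΔ : ∀ i', ∀ γ : (Fin n₁ ⊕ Fin d) →₀ ℕ, tsizeS γ ≤ msize β₀ + k →
      MvPowerSeries.coeff γ (substC u (P i') - substC v (P i')) = 0 := by
    intro i' γ hγ
    have h := hPβ (restR γ) (by rw [← msize_restR] at hγ; exact hγ) i'
    have h2 := dAt0_eq_iff.mp h (restL γ)
    rw [← decompSum γ] at h2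
    rw [map_sub, h2, sub_self]
  -- adjugate computation
  have hkey : ∀ l, Cmat.det * (φ l - φ₀ l) = ∑ i' : Fin N,
      Cmat.adjugate l i' * (substC u (P i') - substC v (P i')) := by
    intro l
    have h1 : Matrix.mulVec Cmat (fun l' => φ l' - φ₀ l') = fun i' => substC u (P i') - substC v (P i') := by
      funext i'
      rw [hfact i']
      show ∑ l' : Fin N, Cmat i' l' * (φ l' - φ₀ l') = _
      exact Finset.sum_congr rfl fun l' _ => mul_comm _ _
    have h2 := congrFun (congrArg Cmat.adjugate.mulVec h1) l
    rw [Matrix.mulVec_mulVec, Matrix.adjugate_mul, Matrix.smul_mulVec,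
      Matrix.one_mulVec] at h2
    exact h2
  have hWprod : ∀ l, ∀ γ : (Fin n₁ ⊕ Fin d) →₀ ℕ, tsizeS γ ≤ msize β₀ + k →
      MvPowerSeries.coeff γ (Cmat.det * (φ l - φ₀ l)) = 0 := by
    intro l γ hγ
    rw [hkey l, map_sum]
    refine Finset.sum_eq_zero fun i' _ => ?_
    rw [MvPowerSeries.coeff_mul]
    refine Finset.sum_eq_zero fun p hp => ?_
    rw [Finset.HasAntidiagonal.mem_antidiagonal] at hp
    have hp2 : p.2 ≤ γ := by rw [← hp]; exact le_add_self
    rw [hΔ i' p.2 (le_trans (tsizeS_mono hp2) hγ), mul_zero]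
  have hfinal : ∀ γ : (Fin n₁ ⊕ Fin d) →₀ ℕ, tsizeS γ ≤ k →
      MvPowerSeries.coeff γ (φ i - φ₀ i) = 0 :=
    mul_tvanish ⟨γ₀, le_of_eq hγ₀t, hD0⟩ (hWprod i)
  refine dAt0_eq_iff.mpr fun γx => ?_
  have h := hfinal (Finsupp.mapDomain Sum.inl γx + Finsupp.mapDomain Sum.inr β)
    (by rw [tsizeS_add, tsizeS_mapDomain_inl, tsizeS_mapDomain_inr, zero_add]; exact hβ)
  rw [map_sub, sub_eq_zero] at h
  exact h

end Paper
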